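/- Let X be an infinite set and let G be a subgroup of Sym(X) fully containing FAlt(X). Then FAlt(X) is a unique minimal normal subgroup of G, i.e. FAlt(X) is a nontrivial normal subgroup of G and FAlt(X) is contained in every nontrivial normal subgroup of G; moreover FAlt(X) is characteristic in G, i.e. every automorphism of G maps FAlt(X) onto FAlt(X). -/

import Mathlib

/-- `FAlt X`: the subgroup of `Equiv.Perm X` generated by all 3-cycles, i.e. by those
permutations whose support has exactly 3 elements. -/
def FAlt (X : Type*) : Subgroup (Equiv.Perm X) :=
  Subgroup.closure {σ : Equiv.Perm X | {x | σ x ≠ x}.ncard = 3}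

namespace FAltAux

open scoped Classical

variable {X : Type*}

/-- The 3-cycle sending `a ↦ b ↦ c ↦ a`. -/
noncomputable def cyc (a b c : X) : Equiv.Perm X := Equiv.swap a b * Equiv.swap b c

lemma cyc_apply (a b c : X) (hab : a ≠ b) (hac : a ≠ c) (hbc : b ≠ c) (x : X) :
    cyc a b c x = if x = a then b else if x = b then c else if x = c then a else x := by
  simp only [cyc, Equiv.Perm.mul_apply, Equiv.swap_apply_def]
  split_ifs <;> simp_all

lemma cyc_supp (a b c : X) (hab : a ≠ b) (hac : a ≠ c) (hbc : b ≠ c) :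
    {x | cyc a b c x ≠ x} = {a, b, c} := by
  ext x
  simp only [Set.mem_setOf_eq, cyc_apply a b c hab hac hbc, Set.mem_insert_iff,
    Set.mem_singleton_iff]
  split_ifs <;> simp_all [eq_comm]

lemma cyc_mem (a b c : X) (hab : a ≠ b) (hac : a ≠ c) (hbc : b ≠ c) :
    cyc a b c ∈ FAlt X := by
  apply Subgroup.subset_closure
  simp only [Set.mem_setOf_eq, cyc_supp a b c hab hac hbc]
  rw [Set.ncard_insert_of_notMem (by simp [hab, hac]),
    Set.ncard_insert_of_notMem (by simp [hbc]), Set.ncard_singleton]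

lemma conj_cyc (g : Equiv.Perm X) (a b c : X) :
    g * cyc a b c * g⁻¹ = cyc (g a) (g b) (g c) := by
  simp only [cyc, Equiv.swap_apply_apply]
  group

lemma cyc_inv (a b c : X) (hab : a ≠ b) (hac : a ≠ c) (hbc : b ≠ c) :
    (cyc a b c)⁻¹ = cyc a c b := by
  rw [inv_eq_iff_mul_eq_one]
  ext x
  simp only [Equiv.Perm.mul_apply, Equiv.Perm.one_apply,
    cyc_apply a b c hab hac hbc, cyc_apply a c b hac hab (Ne.symm hbc)]
  split_ifs <;> simp_all

lemma cyc_mul_cyc (a b c d : X) (hab : a ≠ b) (hac : a ≠ c) (had : a ≠ d)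
    (hbc : b ≠ c) (hbd : b ≠ d) (hcd : c ≠ d) :
    cyc b c d * cyc a d c = cyc a b c := by
  ext x
  simp only [Equiv.Perm.mul_apply,
    cyc_apply a d c had hac (Ne.symm hcd), cyc_apply b c d hbc hbd hcd,
    cyc_apply a b c hab hac hbc]
  split_ifs <;> simp_all

lemma comm_eq (π : Equiv.Perm X) {a c d : X} (ha : π a ≠ a) (hc : π c = c) (hd : π d = d)
    (hca : c ≠ a) (hcb : c ≠ π a) (hda : d ≠ a) (hdb : d ≠ π a) (hcd : c ≠ d) :
    π * cyc a c d * π⁻¹ * (cyc a c d)⁻¹ = cyc a (π a) c := by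
  have h1 : π * cyc a c d * π⁻¹ = cyc (π a) c d := by
    rw [conj_cyc, hc, hd]
  rw [h1, cyc_inv a c d (Ne.symm hca) (Ne.symm hda) hcd]
  exact cyc_mul_cyc a (π a) c d (Ne.symm ha) (Ne.symm hca) (Ne.symm hda)
    (Ne.symm hcb) (Ne.symm hdb) hcd

lemma supp_conj (g σ : Equiv.Perm X) :
    {x | (g * σ * g⁻¹) x ≠ x} = g '' {x | σ x ≠ x} := by
  ext x
  simp only [Set.mem_setOf_eq, Equiv.Perm.mul_apply, Set.mem_image]
  constructor
  · intro h
    exact ⟨g⁻¹ x, fun h' => h (by rw [h']; simp), by simp⟩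
  · rintro ⟨y, hy, rfl⟩
    rw [show g⁻¹ (g y) = y from by simp]
    exact fun h => hy (g.injective h)

lemma falt_normal : (FAlt X).Normal := by
  constructor
  intro n hn g
  have h1 : (FAlt X).map (MulEquiv.toMonoidHom (MulAut.conj g)) = FAlt X := by
    rw [FAlt, MonoidHom.map_closure]
    congr 1
    ext σ
    simp only [Set.mem_image, Set.mem_setOf_eq]
    constructor
    · rintro ⟨τ, hτ, rfl⟩
      simp only [MulEquiv.coe_toMonoidHom, MulAut.conj_apply]
      rw [supp_conj, Set.ncard_image_of_injective _ g.injective]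
      exact hτ
    · intro hσ
      refine ⟨g⁻¹ * σ * g, ?_, ?_⟩
      · have h2 : g⁻¹ * σ * g = g⁻¹ * σ * g⁻¹⁻¹ := by group
        rw [h2, supp_conj, Set.ncard_image_of_injective _ (g⁻¹ : Equiv.Perm X).injective]
        exact hσ
      · simp only [MulEquiv.coe_toMonoidHom, MulAut.conj_apply]
        group
  rw [← h1]
  exact ⟨n, hn, rfl⟩

lemma exists_fresh [Infinite X] (K : Set X) (hK : K.Finite) : ∃ w, w ∉ K :=
  hK.infinite_compl.nonempty

/-- Move one point to another while fixing a finite set. -/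
lemma move [Infinite X] (u v : X) (K : Set X) (hK : K.Finite) (hu : u ∉ K) (hv : v ∉ K) :
    ∃ g ∈ FAlt X, g u = v ∧ ∀ k ∈ K, g k = k := by
  by_cases huv : u = v
  · exact ⟨1, one_mem _, by simp [huv], fun k _ => rfl⟩
  · obtain ⟨w, hw⟩ := exists_fresh (K ∪ {u, v})
      (hK.union ((Set.finite_singleton v).insert u))
    simp only [Set.mem_union, Set.mem_insert_iff, Set.mem_singleton_iff, not_or] at hw
    obtain ⟨hwK, hwu, hwv⟩ := hw
    have h1 : u ≠ w := fun h => hwu h.symm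
    have h2 : v ≠ w := fun h => hwv h.symm
    refine ⟨cyc u v w, cyc_mem u v w huv h1 h2, ?_, ?_⟩
    · simp [cyc_apply u v w huv h1 h2]
    · intro k hk
      rw [cyc_apply u v w huv h1 h2]
      have hk1 : k ≠ u := fun h => hu (h ▸ hk)
      have hk2 : k ≠ v := fun h => hv (h ▸ hk)
      have hk3 : k ≠ w := fun h => hwK (h ▸ hk)
      simp [hk1, hk2, hk3]

lemma triple [Infinite X] (a b c x y z : X) (hab : a ≠ b) (hac : a ≠ c) (hbc : b ≠ c)
    (hxy : x ≠ y) (hxz : x ≠ z) (hyz : y ≠ z) :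
    ∃ g ∈ FAlt X, g a = x ∧ g b = y ∧ g c = z := by
  obtain ⟨g₁, hg₁F, hg₁a, -⟩ := move a x (∅ : Set X) Set.finite_empty (by simp) (by simp)
  have hb1 : g₁ b ∉ ({x} : Set X) := by
    simp only [Set.mem_singleton_iff]
    rw [← hg₁a]
    exact fun h => hab (g₁.injective h.symm)
  obtain ⟨g₂, hg₂F, hg₂b, hg₂fix⟩ := move (g₁ b) y {x} (Set.finite_singleton x) hb1 (by simp only [Set.mem_singleton_iff]; exact Ne.symm hxy)
  have hg₂x : g₂ x = x := hg₂fix x rfl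
  have hc2 : g₂ (g₁ c) ∉ ({x, y} : Set X) := by
    simp only [Set.mem_insert_iff, Set.mem_singleton_iff, not_or]
    constructor
    · rw [← hg₂x, ← hg₁a]
      exact fun h => hac (g₁.injective (g₂.injective h.symm))
    · rw [← hg₂b]
      exact fun h => hbc (g₁.injective (g₂.injective h.symm))
  obtain ⟨g₃, hg₃F, hg₃c, hg₃fix⟩ := move (g₂ (g₁ c)) z {x, y}
    ((Set.finite_singleton y).insert x) hc2 (by simp only [Set.mem_insert_iff, Set.mem_singleton_iff, not_or]; exact ⟨Ne.symm hxz, Ne.symm hyz⟩)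
  refine ⟨g₃ * g₂ * g₁, mul_mem (mul_mem hg₃F hg₂F) hg₁F, ?_, ?_, ?_⟩
  · simp only [Equiv.Perm.mul_apply, hg₁a, hg₂x]
    exact hg₃fix x (by simp)
  · simp only [Equiv.Perm.mul_apply, hg₂b]
    exact hg₃fix y (by simp)
  · simp only [Equiv.Perm.mul_apply, hg₃c]

lemma gen_aux {σ : Equiv.Perm X} {x y z : X} (hxy : x ≠ y) (hxz : x ≠ z) (hyz : y ≠ z)
    (h : ∀ u, σ u ≠ u ↔ (u = x ∨ u = y ∨ u = z)) (hσx : σ x = y) :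
    σ = cyc x y z := by
  have hσy : σ y = z := by
    have h1 : σ y ≠ y := (h y).2 (by tauto)
    have h2 : σ y = x ∨ σ y = y ∨ σ y = z := (h _).1 (fun hh => h1 (σ.injective hh))
    rcases h2 with h2 | h2 | h2
    · -- σ y = x leads to contradiction via z
      exfalso
      have hz1 : σ z ≠ z := (h z).2 (by tauto)
      have hz2 : σ z = x ∨ σ z = y ∨ σ z = z := (h _).1 (fun hh => hz1 (σ.injective hh))
      rcases hz2 with hz2 | hz2 | hz2
      · exact hyz (σ.injective (h2.trans hz2.symm))
      · exact hxz (σ.injective (hσx.trans hz2.symm))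
      · exact hz1 hz2
    · exact absurd h2 h1
    · exact h2
  have hσz : σ z = x := by
    have h1 : σ z ≠ z := (h z).2 (by tauto)
    have h2 : σ z = x ∨ σ z = y ∨ σ z = z := (h _).1 (fun hh => h1 (σ.injective hh))
    rcases h2 with h2 | h2 | h2
    · exact h2
    · exact absurd (σ.injective (hσx.trans h2.symm)) hxz
    · exact absurd h2 h1
  ext u
  rw [cyc_apply x y z hxy hxz hyz]
  by_cases h1 : u = x
  · simp [h1, hσx]
  by_cases h2 : u = y
  · simp [h1, h2, hσy, Ne.symm hxy]
  by_cases h3 : u = z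
  · simp [h1, h2, h3, hσz, Ne.symm hxz, Ne.symm hyz]
  · simp only [h1, h2, h3, if_false]
    by_contra hh
    rcases (h u).1 hh with h' | h' | h' <;> tauto

/-- Every generator of `FAlt` is a `cyc`. -/
lemma gen_eq_cyc {σ : Equiv.Perm X} (hσ : {x | σ x ≠ x}.ncard = 3) :
    ∃ x y z : X, x ≠ y ∧ x ≠ z ∧ y ≠ z ∧ σ = cyc x y z := by
  rw [Set.ncard_eq_three] at hσ
  obtain ⟨x, y, z, hxy, hxz, hyz, hS⟩ := hσ
  have h : ∀ u, σ u ≠ u ↔ (u = x ∨ u = y ∨ u = z) := by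
    intro u
    have := Set.ext_iff.1 hS u
    simpa using this
  have hσx1 : σ x ≠ x := (h x).2 (by tauto)
  have hσx : σ x = x ∨ σ x = y ∨ σ x = z := (h _).1 (fun hh => hσx1 (σ.injective hh))
  rcases hσx with h0 | h0 | h0
  · exact absurd h0 hσx1
  · exact ⟨x, y, z, hxy, hxz, hyz, gen_aux hxy hxz hyz h h0⟩
  · refine ⟨x, z, y, hxz, hxy, Ne.symm hyz, gen_aux hxz hxy (Ne.symm hyz) ?_ h0⟩
    intro u
    rw [h u]
    tauto

/-- Step 1: commutator of a nontrivial permutation with a suitable 3-cycle is nontrivial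
with finite support. -/
lemma step1 [Infinite X] {σ : Equiv.Perm X} (hσ : σ ≠ 1) :
    ∃ τ ∈ FAlt X, σ * τ * σ⁻¹ * τ⁻¹ ≠ 1 ∧ {x | (σ * τ * σ⁻¹ * τ⁻¹) x ≠ x}.Finite := by
  obtain ⟨a, ha⟩ : ∃ a, σ a ≠ a := by
    by_contra h
    push_neg at h
    exact hσ (Equiv.ext h)
  set b := σ a with hb
  obtain ⟨c, hc⟩ := exists_fresh ({a, b} : Set X) ((Set.finite_singleton b).insert a)
  simp only [Set.mem_insert_iff, Set.mem_singleton_iff, not_or] at hc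
  obtain ⟨d, hd⟩ := exists_fresh ({a, b, c} : Set X)
    (((Set.finite_singleton c).insert b).insert a)
  simp only [Set.mem_insert_iff, Set.mem_singleton_iff, not_or] at hd
  have hac : a ≠ c := fun h => hc.1 h.symm
  have had : a ≠ d := fun h => hd.1 h.symm
  have hcd : c ≠ d := fun h => hd.2.2 h.symm
  refine ⟨cyc a c d, cyc_mem a c d hac had hcd, ?_, ?_⟩
  · intro h
    have hτb : cyc a c d b = b := by
      rw [cyc_apply a c d hac had hcd]
      have hba : b ≠ a := by rw [hb]; exact ha
      have hbc' : b ≠ c := fun h => hc.2 h.symm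
      have hbd : b ≠ d := fun h => hd.2.1 h.symm
      simp [hba, hbc', hbd]
    have hτinvb : (cyc a c d)⁻¹ b = b := by
      conv_lhs => rw [← hτb]
      simp
    have happ : (σ * cyc a c d * σ⁻¹ * (cyc a c d)⁻¹) b = σ c := by
      simp only [Equiv.Perm.mul_apply, hτinvb]
      rw [show σ⁻¹ b = a from by rw [hb]; simp]
      rw [cyc_apply a c d hac had hcd]
      simp
    rw [h] at happ
    simp only [Equiv.Perm.one_apply] at happ
    exact hc.1 (σ.injective (happ.symm.trans hb))
  · apply Set.Finite.subset
      (((((Set.finite_singleton d).insert c).insert a).image σ).union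
        (((Set.finite_singleton d).insert c).insert a))
    intro u hu
    simp only [Set.mem_setOf_eq] at hu
    by_contra hmem
    simp only [Set.mem_union, Set.mem_image, Set.mem_insert_iff, Set.mem_singleton_iff,
      not_or, not_exists, not_and] at hmem
    obtain ⟨him, hu1, hu2, hu3⟩ := hmem
    apply hu
    have hτu : cyc a c d u = u := by
      rw [cyc_apply a c d hac had hcd]; simp [hu1, hu2, hu3]
    have hτinvu : (cyc a c d)⁻¹ u = u := by
      conv_lhs => rw [← hτu]; simp
    have hv : σ⁻¹ u ≠ a ∧ σ⁻¹ u ≠ c ∧ σ⁻¹ u ≠ d := by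
      refine ⟨fun h => him a (by simp) ?_, fun h => him c (by simp) ?_,
        fun h => him d (by simp) ?_⟩ <;>
        · rw [← h]; simp
    have hτv : cyc a c d (σ⁻¹ u) = σ⁻¹ u := by
      rw [cyc_apply a c d hac had hcd]; rw [if_neg hv.1, if_neg hv.2.1, if_neg hv.2.2]
    simp only [Equiv.Perm.mul_apply, hτinvu, hτv]
    simp

/-- Step 2: commutator of a nontrivial finitely supported permutation with a suitable
3-cycle is a 3-cycle. -/
lemma step2 [Infinite X] {π : Equiv.Perm X} (hπ : π ≠ 1)
    (hfin : {x | π x ≠ x}.Finite) :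
    ∃ a b c : X, a ≠ b ∧ a ≠ c ∧ b ≠ c ∧
      ∃ τ ∈ FAlt X, π * τ * π⁻¹ * τ⁻¹ = cyc a b c := by
  obtain ⟨a, ha⟩ : ∃ a, π a ≠ a := by
    by_contra h
    push_neg at h
    exact hπ (Equiv.ext h)
  have hbsupp : π (π a) ≠ π a := fun h => ha (π.injective h)
  obtain ⟨c, hc⟩ := exists_fresh _ hfin
  obtain ⟨d, hd⟩ := exists_fresh ({x | π x ≠ x} ∪ {c}) (hfin.union (Set.finite_singleton c))
  simp only [Set.mem_union, Set.mem_singleton_iff, not_or] at hd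
  simp only [Set.mem_setOf_eq, not_not] at hc hd
  have hπc : π c = c := hc
  have hπd : π d = d := hd.1
  have hca : c ≠ a := fun h => ha (h ▸ hπc)
  have hcb : c ≠ π a := fun h => hbsupp (h ▸ hπc)
  have hda : d ≠ a := fun h => ha (h ▸ hπd)
  have hdb : d ≠ π a := fun h => hbsupp (h ▸ hπd)
  have hcd : c ≠ d := fun h => hd.2 h.symm
  refine ⟨a, π a, c, Ne.symm ha, Ne.symm hca, Ne.symm hcb, cyc a c d,
    cyc_mem a c d (Ne.symm hca) (Ne.symm hda) hcd, ?_⟩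
  exact comm_eq π ha hπc hπd hca hcb hda hdb hcd

end FAltAux

open FAltAux in
/-- If `G` fully contains `FAlt X` then `FAlt X` is the unique minimal normal subgroup
of `G`, and it is characteristic in `G`. -/
theorem fAlt_unique_minimal_normal_and_characteristic {X : Type*} [Infinite X]
    (G : Subgroup (Equiv.Perm X)) (hG : FAlt X ≤ G) :
    ((FAlt X).subgroupOf G).Normal ∧
    (FAlt X).subgroupOf G ≠ ⊥ ∧
    (∀ N : Subgroup ↥G, N.Normal → N ≠ ⊥ → (FAlt X).subgroupOf G ≤ N) ∧
    (∀ φ : ↥G ≃* ↥G,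
      Subgroup.map (φ : ↥G →* ↥G) ((FAlt X).subgroupOf G) = (FAlt X).subgroupOf G) := by
  have hnormal : ((FAlt X).subgroupOf G).Normal := falt_normal.subgroupOf G
  have hnebot : (FAlt X).subgroupOf G ≠ ⊥ := by
    obtain ⟨a⟩ : Nonempty X := inferInstance
    obtain ⟨b, hb⟩ := exists_fresh ({a} : Set X) (Set.finite_singleton a)
    obtain ⟨c, hc⟩ := exists_fresh ({a, b} : Set X) ((Set.finite_singleton b).insert a)
    simp only [Set.mem_singleton_iff] at hb
    simp only [Set.mem_insert_iff, Set.mem_singleton_iff, not_or] at hc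
    have hab : a ≠ b := fun h => hb h.symm
    have hac : a ≠ c := fun h => hc.1 h.symm
    have hbc : b ≠ c := fun h => hc.2 h.symm
    have hρ : cyc a b c ∈ FAlt X := cyc_mem a b c hab hac hbc
    rw [Subgroup.ne_bot_iff_exists_ne_one]
    refine ⟨⟨⟨cyc a b c, hG hρ⟩, Subgroup.mem_subgroupOf.2 hρ⟩, ?_⟩
    intro h
    have : cyc a b c = 1 := by
      have := Subtype.ext_iff.1 (Subtype.ext_iff.1 h)
      simpa using this
    have ha1 : cyc a b c a = a := by rw [this]; rfl
    rw [cyc_apply a b c hab hac hbc] at ha1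
    simp only [if_pos rfl] at ha1
    exact hab ha1.symm
  have hmin : ∀ N : Subgroup ↥G, N.Normal → N ≠ ⊥ → (FAlt X).subgroupOf G ≤ N := by
    intro N hN hNbot
    obtain ⟨m, hm1⟩ := Subgroup.ne_bot_iff_exists_ne_one.1 hNbot
    set σ : Equiv.Perm X := ((m : ↥G) : Equiv.Perm X) with hσdef
    have hσ1 : σ ≠ 1 := by
      intro h
      apply hm1
      have h2 : (m : ↥G) = 1 := Subtype.ext (by rw [← hσdef, h]; rfl)
      exact Subtype.ext h2
    obtain ⟨τ, hτF, hπ1, hπfin⟩ := step1 hσ1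
    set t : ↥G := ⟨τ, hG hτF⟩ with ht
    set πG : ↥G := (m : ↥G) * t * (m : ↥G)⁻¹ * t⁻¹ with hπG
    have hπGN : πG ∈ N := by
      have h1 : (m : ↥G) ∈ N := m.2
      have h2 : t * (m : ↥G)⁻¹ * t⁻¹ ∈ N := hN.conj_mem _ (inv_mem h1) t
      have : πG = (m : ↥G) * (t * (m : ↥G)⁻¹ * t⁻¹) := by rw [hπG]; group
      rw [this]
      exact mul_mem h1 h2
    have hπcoe : ((πG : ↥G) : Equiv.Perm X) = σ * τ * σ⁻¹ * τ⁻¹ := rfl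
    obtain ⟨a, b, c, hab, hac, hbc, τ', hτ'F, hcomm⟩ := step2 hπ1 (by exact hπfin)
    set t' : ↥G := ⟨τ', hG hτ'F⟩ with ht'
    set ρG : ↥G := πG * t' * πG⁻¹ * t'⁻¹ with hρG
    have hρGN : ρG ∈ N := by
      have h2 : t' * πG⁻¹ * t'⁻¹ ∈ N := hN.conj_mem _ (inv_mem hπGN) t'
      have : ρG = πG * (t' * πG⁻¹ * t'⁻¹) := by rw [hρG]; group
      rw [this]
      exact mul_mem hπGN h2
    have hρcoe : ((ρG : ↥G) : Equiv.Perm X) = cyc a b c := by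
      rw [← hcomm]
      rfl
    -- Now show FAlt X ≤ map of N
    have hFN : FAlt X ≤ Subgroup.map G.subtype N := by
      rw [FAlt]
      rw [Subgroup.closure_le]
      intro σ₀ hσ₀
      obtain ⟨x, y, z, hxy, hxz, hyz, rfl⟩ := gen_eq_cyc hσ₀
      obtain ⟨g, hgF, hga, hgb, hgc⟩ := triple a b c x y z hab hac hbc hxy hxz hyz
      have hconj : g * cyc a b c * g⁻¹ = cyc x y z := by
        rw [conj_cyc, hga, hgb, hgc]
      set gE : ↥G := ⟨g, hG hgF⟩ with hgE
      have hmemN : gE * ρG * gE⁻¹ ∈ N := hN.conj_mem _ hρGN gE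
      have hcoe : ((gE * ρG * gE⁻¹ : ↥G) : Equiv.Perm X) = cyc x y z := by
        have hgEcoe : (gE : Equiv.Perm X) = g := rfl
        push_cast
        rw [hρcoe]
        exact hconj
      exact ⟨gE * ρG * gE⁻¹, hmemN, hcoe⟩
    intro x hx
    have hx' : (x : Equiv.Perm X) ∈ FAlt X := Subgroup.mem_subgroupOf.1 hx
    obtain ⟨y, hyN, hy⟩ := hFN hx'
    have : y = x := Subtype.ext hy
    rwa [← this]
  refine ⟨hnormal, hnebot, hmin, ?_⟩
  intro φ
  have key : ∀ ψ : ↥G ≃* ↥G,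
      (FAlt X).subgroupOf G ≤ Subgroup.map (ψ : ↥G →* ↥G) ((FAlt X).subgroupOf G) := by
    intro ψ
    apply hmin
    · exact hnormal.map _ (MulEquiv.surjective ψ)
    · rw [Ne, Subgroup.map_eq_bot_iff_of_injective _ (MulEquiv.injective ψ)]
      exact hnebot
  apply le_antisymm
  · have h1 := key φ.symm
    have h2 := Subgroup.map_mono (f := (φ : ↥G →* ↥G)) h1
    rw [Subgroup.map_map] at h2
    have h3 : (φ : ↥G →* ↥G).comp (φ.symm : ↥G →* ↥G) = MonoidHom.id ↥G := by
      ext x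
      simp
    rw [h3, Subgroup.map_id] at h2
    exact h2
  · exact key φ
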